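/- For a filtered diagram p : I → Poly in which all structure maps are cartesian, filtered colimits are computed pointwise: for every set X, the canonical function colim_i (p_i(X)) → (colim_i p_i)(X) is a bijection. -/

import Mathlib

universe v u

open CategoryTheory Limits

/-- A morphism of polynomial functors: forwards on positions, backwards on directions. -/
structure PolyHom (p q : PFunctor.{u}) : Type u where
  onPos : p.A → q.A
  onDir : ∀ a : p.A, q.B (onPos a) → p.B a

/-- The category `Poly` of polynomial endofunctors on `Set` and natural transformations
between them (presented position/direction-wise). -/
instance : Category PFunctor.{u} where
  Hom := PolyHom
  id p := ⟨fun a => a, fun _ d => d⟩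
  comp φ ψ := ⟨fun a => ψ.onPos (φ.onPos a), fun a d => φ.onDir a (ψ.onDir (φ.onPos a) d)⟩
  id_comp _ := rfl
  comp_id _ := rfl
  assoc _ _ _ := rfl

/-- Post-composition `q ↦ p ◁ q` with a fixed polynomial `p`, as a functor `Poly ⥤ Poly`.
(`PFunctor.comp p q` is the composite functor `p ∘ q`.) -/
def compL (p : PFunctor.{u}) : PFunctor.{u} ⥤ PFunctor.{u} where
  obj q := p.comp q
  map φ :=
    { onPos := fun x => ⟨x.1, fun b => φ.onPos (x.2 b)⟩
      onDir := fun x d => ⟨d.1, φ.onDir (x.2 d.1) d.2⟩ }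
  map_id _ := rfl
  map_comp _ _ := rfl

/-- Pre-composition `p ↦ p ◁ q` with a fixed polynomial `q`, as a functor `Poly ⥤ Poly`. -/
def compR (q : PFunctor.{u}) : PFunctor.{u} ⥤ PFunctor.{u} where
  obj p := p.comp q
  map φ :=
    { onPos := fun x => ⟨φ.onPos x.1, fun b => x.2 (φ.onDir x.1 b)⟩
      onDir := fun x d => ⟨φ.onDir x.1 d.1, d.2⟩ }
  map_id _ := rfl
  map_comp _ _ := rfl

/-- Evaluation of polynomial functors at a set `X`, as a functor `Poly ⥤ Set`. -/
def evalPoly (X : Type u) : PFunctor.{u} ⥤ Type u where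
  obj p := p.Obj X
  map φ := TypeCat.ofHom fun x => ⟨φ.onPos x.1, fun d => x.2 (φ.onDir x.1 d)⟩
  map_id _ := rfl
  map_comp _ _ := rfl

/-- A map of polynomial functors is cartesian if all the backwards maps on directions
are bijections (equivalently, all naturality squares are pullbacks). -/
def IsCartesian {p q : PFunctor.{u}} (φ : p ⟶ q) : Prop :=
  ∀ a, Function.Bijective (φ.onDir a)

/-- The wide subcategory `Poly_Cart` of polynomial functors and cartesian maps. -/
def PolyCart : Type (u + 1) := PFunctor.{u}

instance : Category PolyCart.{u} where
  Hom p q := { φ : (show PFunctor.{u} from p) ⟶ (show PFunctor.{u} from q) // IsCartesian φ }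
  id p := ⟨𝟙 _, fun _ => Function.bijective_id⟩
  comp φ ψ := ⟨φ.1 ≫ ψ.1, fun a => (φ.2 a).comp (ψ.2 (φ.1.onPos a))⟩
  id_comp _ := rfl
  comp_id _ := rfl
  assoc _ _ _ := rfl

/-- The inclusion functor `Poly_Cart ⥤ Poly`. -/
def polyCartIncl : PolyCart.{u} ⥤ PFunctor.{u} where
  obj p := p
  map φ := φ.1
  map_id _ := rfl
  map_comp _ _ := rfl

/-! ## Auxiliary material -/

theorem PolyHom.ext' {p q : PFunctor.{u}} {φ ψ : p ⟶ q} (h : ∀ a, φ.onPos a = ψ.onPos a)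
    (h2 : ∀ a (d : q.B (ψ.onPos a)), φ.onDir a (cast (congrArg q.B (h a)).symm d) = ψ.onDir a d) :
    φ = ψ := by
  obtain ⟨f, g⟩ := φ
  obtain ⟨f', g'⟩ := ψ
  obtain rfl : f = f' := funext h
  obtain rfl : g = g' := funext fun a => funext fun d => h2 a d
  rfl

theorem PolyHom.congr_onPos {p q : PFunctor.{u}} {φ ψ : p ⟶ q} (e : φ = ψ) (a : p.A) :
    φ.onPos a = ψ.onPos a := by rw [e]

theorem PolyHom.congr_onDir {p q : PFunctor.{u}} {φ ψ : p ⟶ q} (e : φ = ψ) (a : p.A)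
    (d : q.B (ψ.onPos a)) :
    φ.onDir a (cast (congrArg (fun χ : p ⟶ q => q.B (χ.onPos a)) e).symm d) = ψ.onDir a d := by
  subst e; rfl

lemma obj_snd_congr {p : PFunctor.{u}} {X : Type u} {z w : p.Obj X} (e : z = w)
    {d : p.B z.1} {d' : p.B w.1} (hd : HEq d d') : z.2 d = w.2 d' := by
  subst e; rw [eq_of_heq hd]

lemma objMk_congr {p : PFunctor.{u}} {X : Type u} {c c' : p.A} (h : c = c')
    {f : p.B c → X} {f' : p.B c' → X}
    (hf : ∀ z z', HEq z z' → f z = f' z') : (⟨c, f⟩ : p.Obj X) = ⟨c', f'⟩ := by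
  subst h
  exact congrArg _ (funext fun z => hf z z HEq.rfl)

/-- The positions functor `Poly ⥤ Type`. -/
def posF : PFunctor.{u} ⥤ Type u where
  obj p := p.A
  map φ := TypeCat.ofHom φ.onPos
  map_id _ := rfl
  map_comp _ _ := rfl

section Aux

variable {I : Type u} [Category.{u} I] (F : I ⥤ PolyCart.{u})

abbrev PP : I ⥤ PFunctor.{u} := F ⋙ polyCartIncl

abbrev AFunc : I ⥤ Type u := F ⋙ polyCartIncl ⋙ posF

def APt : Type u := Quot (fun (x y : Σ i : I, ((PP F).obj i).A) =>
  ∃ φ : x.1 ⟶ y.1, ((PP F).map φ).onPos x.2 = y.2)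

def iA (i : I) (a : ((PP F).obj i).A) : APt F := Quot.mk _ ⟨i, a⟩

lemma iA_w {i j : I} (φ : i ⟶ j) (a : ((PP F).obj i).A) :
    iA F i a = iA F j (((PP F).map φ).onPos a) := Quot.sound ⟨φ, rfl⟩

def coconeA : Cocone (AFunc F) where
  pt := APt F
  ι := { app := fun i => TypeCat.ofHom fun a => iA F i a
         naturality := fun i j φ => by ext a; exact (iA_w F φ a).symm }

def coconeA_isColimit : IsColimit (coconeA F) where
  desc s := TypeCat.ofHom <| Quot.lift (fun x => s.ι.app x.1 x.2) (by
    rintro ⟨i, a⟩ ⟨j, b⟩ ⟨φ, e⟩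
    dsimp at e ⊢
    rw [← e]
    exact (ConcreteCategory.congr_hom (s.w φ) a).symm)
  fac s i := rfl
  uniq s m hm := by
    ext x
    induction x using Quot.ind with
    | _ k => exact ConcreteCategory.congr_hom (hm k.1) k.2

/-- Directions of the colimit polynomial at a position `x`. -/
def DirPt (x : APt F) : Type u :=
  { s : ∀ (j : I) (b : ((PP F).obj j).A), iA F j b = x → ((PP F).obj j).B b //
    ∀ (j k : I) (φ : j ⟶ k) (b : ((PP F).obj j).A)
      (h : iA F k (((PP F).map φ).onPos b) = x),
      s j b ((iA_w F φ b).trans h) = ((PP F).map φ).onDir b (s k _ h) }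

lemma DirPt.cast_fst {x y : APt F} (e : y = x) (d : DirPt F x) (j : I)
    (b : ((PP F).obj j).A) (h : iA F j b = y) :
    (cast (congrArg (DirPt F) e).symm d).1 j b h = d.1 j b (h.trans e) := by
  subst e; rfl

lemma DirPt.fst_congr {x : APt F} (s : DirPt F x) (k : I) {c c' : ((PP F).obj k).A}
    (hcc : c = c') (hc : iA F k c = x) (hc' : iA F k c' = x) :
    HEq (s.1 k c hc) (s.1 k c' hc') := by subst hcc; rfl

def colimP : PFunctor.{u} := ⟨APt F, DirPt F⟩

def coconeP : Cocone (PP F) where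
  pt := colimP F
  ι := {
    app := fun i => ⟨iA F i, fun a s => s.1 i a rfl⟩
    naturality := fun i j φ => by
      refine Eq.trans ?_ (Category.comp_id _).symm
      refine (PolyHom.ext' (fun a => (iA_w F φ a).symm) ?_)
      intro a d
      refine Eq.trans (congrArg (((PP F).map φ).onDir a)
        (DirPt.cast_fst F ((iA_w F φ a).symm) d j _ rfl)) ?_
      exact (d.2 i j φ a (iA_w F φ a).symm).symm }

def descPos (s : Cocone (PP F)) : APt F → s.pt.A :=
  Quot.lift (fun k => (s.ι.app k.1).onPos k.2) (by
    rintro ⟨i, a⟩ ⟨j, b⟩ ⟨φ, e⟩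
    dsimp at e ⊢
    rw [← e]
    exact (PolyHom.congr_onPos (s.w φ) a).symm)

def descPoly (s : Cocone (PP F)) : colimP F ⟶ s.pt where
  onPos := descPos F s
  onDir := fun x d =>
    ⟨fun j b h => (s.ι.app j).onDir b
        (cast (congrArg (fun y => s.pt.B (descPos F s y)) h).symm d), by
      intro j k φ b h
      have key := PolyHom.congr_onDir (s.w φ) b
        (cast (congrArg (fun y => s.pt.B (descPos F s y)) ((iA_w F φ b).trans h)).symm d)
      exact key.symm.trans (congrArg (fun z => ((PP F).map φ ≫ s.ι.app k).onDir b z)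
        (cast_cast _ _ d))⟩

def coconeP_isColimit : IsColimit (coconeP F) where
  desc := descPoly F
  fac s i := rfl
  uniq s m hm := by
    refine PolyHom.ext' (fun x => ?_) (fun x d => ?_)
    · induction x using Quot.ind with
      | _ k => exact PolyHom.congr_onPos (hm k.1) k.2
    · refine Subtype.ext (funext fun j => funext fun b => funext fun hb => ?_)
      induction hb
      exact PolyHom.congr_onDir (hm j) b d


section Filtered

variable [IsFiltered I]

lemma exists_amalgam {i j : I} {a : ((PP F).obj i).A} {b : ((PP F).obj j).A}
    (h : iA F i a = iA F j b) :
    ∃ (k : I) (u : i ⟶ k) (v : j ⟶ k),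
      ((PP F).map u).onPos a = ((PP F).map v).onPos b :=
  (Types.FilteredColimit.isColimit_eq_iff (AFunc F) (coconeA_isColimit F) (xi := a) (xj := b)).mp h

/-- Direction bijection along a (cartesian) structure map. -/
noncomputable def dEq {i j : I} (φ : i ⟶ j) (a : ((PP F).obj i).A) :
    ((PP F).obj j).B (((PP F).map φ).onPos a) ≃ ((PP F).obj i).B a :=
  Equiv.ofBijective _ ((F.map φ).2 a)

/-- Transport of a direction along an amalgam. -/
noncomputable def amVal {i j k : I} (u : i ⟶ k) (v : j ⟶ k) {a : ((PP F).obj i).A}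
    {b : ((PP F).obj j).A} (h : ((PP F).map u).onPos a = ((PP F).map v).onPos b)
    (d : ((PP F).obj i).B a) : ((PP F).obj j).B b :=
  ((PP F).map v).onDir b (cast (congrArg ((PP F).obj k).B h) ((dEq F u a).symm d))

/-- An element `e` matches `d` through the amalgam `(u, v)`. -/
def Matches {i j k : I} (u : i ⟶ k) (v : j ⟶ k) {a : ((PP F).obj i).A}
    {b : ((PP F).obj j).A} (d : ((PP F).obj i).B a) (e : ((PP F).obj j).B b) : Prop :=
  ∃ (dk : ((PP F).obj k).B (((PP F).map u).onPos a))
    (ek : ((PP F).obj k).B (((PP F).map v).onPos b)),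
      HEq dk ek ∧ ((PP F).map u).onDir a dk = d ∧ ((PP F).map v).onDir b ek = e

lemma amVal_matches {i j k : I} (u : i ⟶ k) (v : j ⟶ k) {a : ((PP F).obj i).A}
    {b : ((PP F).obj j).A} (h : ((PP F).map u).onPos a = ((PP F).map v).onPos b)
    (d : ((PP F).obj i).B a) : Matches F u v d (amVal F u v h d) :=
  ⟨(dEq F u a).symm d, cast (congrArg ((PP F).obj k).B h) ((dEq F u a).symm d),
    (cast_heq _ _).symm, (dEq F u a).apply_symm_apply d, rfl⟩

lemma dEq_symm_hcongr {k l : I} (w : k ⟶ l) {c c' : ((PP F).obj k).A} (h : c = c')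
    {dk : ((PP F).obj k).B c} {ek : ((PP F).obj k).B c'} (hk : HEq dk ek) :
    HEq ((dEq F w c).symm dk) ((dEq F w c').symm ek) := by
  subst h
  rw [eq_of_heq hk]

lemma matches_step {i j k l : I} (u : i ⟶ k) (v : j ⟶ k) (w : k ⟶ l)
    {a : ((PP F).obj i).A} {b : ((PP F).obj j).A}
    (h : ((PP F).map u).onPos a = ((PP F).map v).onPos b)
    {d : ((PP F).obj i).B a} {e : ((PP F).obj j).B b}
    (hm : Matches F u v d e) : Matches F (u ≫ w) (v ≫ w) d e := by
  obtain ⟨dk, ek, hk, hd, he⟩ := hm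
  refine ⟨cast (congrArg (fun χ : (PP F).obj i ⟶ (PP F).obj l =>
      ((PP F).obj l).B (χ.onPos a)) ((PP F).map_comp u w)).symm
        ((dEq F w (((PP F).map u).onPos a)).symm dk),
    cast (congrArg (fun χ : (PP F).obj j ⟶ (PP F).obj l =>
      ((PP F).obj l).B (χ.onPos b)) ((PP F).map_comp v w)).symm
        ((dEq F w (((PP F).map v).onPos b)).symm ek), ?_, ?_, ?_⟩
  · exact (cast_heq _ _).trans ((dEq_symm_hcongr F w h hk).trans (cast_heq _ _).symm)
  · rw [PolyHom.congr_onDir ((PP F).map_comp u w) a]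
    show ((PP F).map u).onDir a (((PP F).map w).onDir _ ((dEq F w _).symm dk)) = d
    rw [show ((PP F).map w).onDir (((PP F).map u).onPos a) ((dEq F w _).symm dk) = dk from
      (dEq F w _).apply_symm_apply dk]
    exact hd
  · rw [PolyHom.congr_onDir ((PP F).map_comp v w) b]
    show ((PP F).map v).onDir b (((PP F).map w).onDir _ ((dEq F w _).symm ek)) = e
    rw [show ((PP F).map w).onDir (((PP F).map v).onPos b) ((dEq F w _).symm ek) = ek from
      (dEq F w _).apply_symm_apply ek]
    exact he

lemma matches_unique {i j k : I} (u : i ⟶ k) (v : j ⟶ k) {a : ((PP F).obj i).A}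
    {b : ((PP F).obj j).A} (h : ((PP F).map u).onPos a = ((PP F).map v).onPos b)
    {d : ((PP F).obj i).B a} {e e' : ((PP F).obj j).B b}
    (hm : Matches F u v d e) (hm' : Matches F u v d e') : e = e' := by
  obtain ⟨dk, ek, hk, hd, he⟩ := hm
  obtain ⟨dk', ek', hk', hd', he'⟩ := hm'
  have hdk : dk = dk' := ((F.map u).2 a).1 (hd.trans hd'.symm)
  subst hdk
  have : ek = ek' := eq_of_heq (hk.symm.trans hk')
  subst this
  exact he.symm.trans he'


lemma amVal_indep {i j k k' : I} (u : i ⟶ k) (v : j ⟶ k) (u' : i ⟶ k') (v' : j ⟶ k')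
    {a : ((PP F).obj i).A} {b : ((PP F).obj j).A}
    (h : ((PP F).map u).onPos a = ((PP F).map v).onPos b)
    (h' : ((PP F).map u').onPos a = ((PP F).map v').onPos b)
    (d : ((PP F).obj i).B a) : amVal F u v h d = amVal F u' v' h' d := by
  -- find a common refinement equalizing both amalgams
  let l₀ := IsFiltered.max k k'
  let α : k ⟶ l₀ := IsFiltered.leftToMax k k'
  let β : k' ⟶ l₀ := IsFiltered.rightToMax k k'
  let l₁ := IsFiltered.coeq (u ≫ α) (u' ≫ β)
  let γ : l₀ ⟶ l₁ := IsFiltered.coeqHom (u ≫ α) (u' ≫ β)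
  let l₂ := IsFiltered.coeq (v ≫ α ≫ γ) (v' ≫ β ≫ γ)
  let δ : l₁ ⟶ l₂ := IsFiltered.coeqHom (v ≫ α ≫ γ) (v' ≫ β ≫ γ)
  have hu : u ≫ (α ≫ γ ≫ δ) = u' ≫ (β ≫ γ ≫ δ) := by
    have := IsFiltered.coeq_condition (u ≫ α) (u' ≫ β)
    simp only [← Category.assoc] at this ⊢
    rw [this]
  have hv : v ≫ (α ≫ γ ≫ δ) = v' ≫ (β ≫ γ ≫ δ) := by
    have := IsFiltered.coeq_condition (v ≫ α ≫ γ) (v' ≫ β ≫ γ)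
    simp only [← Category.assoc] at this ⊢
    rw [this]
  have hpos : ((PP F).map (u ≫ (α ≫ γ ≫ δ))).onPos a
      = ((PP F).map (v ≫ (α ≫ γ ≫ δ))).onPos b := by
    rw [(PP F).map_comp u (α ≫ γ ≫ δ), (PP F).map_comp v (α ≫ γ ≫ δ)]
    show ((PP F).map _).onPos (((PP F).map u).onPos a)
      = ((PP F).map _).onPos (((PP F).map v).onPos b)
    rw [h]
  have m1 : Matches F (u ≫ (α ≫ γ ≫ δ)) (v ≫ (α ≫ γ ≫ δ)) d (amVal F u v h d) :=
    matches_step F u v _ h (amVal_matches F u v h d)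
  have m2 : Matches F (u' ≫ (β ≫ γ ≫ δ)) (v' ≫ (β ≫ γ ≫ δ)) d (amVal F u' v' h' d) :=
    matches_step F u' v' _ h' (amVal_matches F u' v' h' d)
  rw [hu, hv] at m1
  exact matches_unique F _ _ (hu ▸ hv ▸ hpos) m1 m2

lemma amVal_id {i : I} {a : ((PP F).obj i).A} (d : ((PP F).obj i).B a) :
    amVal F (𝟙 i) (𝟙 i) rfl d = d :=
  (dEq F (𝟙 i) a).apply_symm_apply d

lemma amVal_precomp {i j j' k : I} (u : i ⟶ k) (ψ : j ⟶ j') (v : j' ⟶ k)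
    {a : ((PP F).obj i).A} {b : ((PP F).obj j).A}
    (h : ((PP F).map u).onPos a = ((PP F).map v).onPos (((PP F).map ψ).onPos b))
    (h2 : ((PP F).map u).onPos a = ((PP F).map (ψ ≫ v)).onPos b)
    (d : ((PP F).obj i).B a) :
    amVal F u (ψ ≫ v) h2 d = ((PP F).map ψ).onDir b (amVal F u v h d) := by
  have key := PolyHom.congr_onDir ((PP F).map_comp ψ v) b
    (cast (congrArg ((PP F).obj k).B h) ((dEq F u a).symm d))
  rw [cast_cast] at key
  exact key

/-- The lift of a direction at a representative to a direction of the colimit. -/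
noncomputable def liftDir (i : I) (a : ((PP F).obj i).A) (x : APt F) (h : iA F i a = x)
    (d : ((PP F).obj i).B a) : DirPt F x := by
  refine ⟨fun j b hb =>
    amVal F (exists_amalgam F (h.trans hb.symm)).choose_spec.choose
      (exists_amalgam F (h.trans hb.symm)).choose_spec.choose_spec.choose
      (exists_amalgam F (h.trans hb.symm)).choose_spec.choose_spec.choose_spec d, ?_⟩
  intro j j' ψ b hb'
  have hpre : ((PP F).map (exists_amalgam F (h.trans hb'.symm)).choose_spec.choose).onPos a
      = ((PP F).map
          (ψ ≫ (exists_amalgam F (h.trans hb'.symm)).choose_spec.choose_spec.choose)).onPos b := by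
    rw [(PP F).map_comp]
    exact (exists_amalgam F (h.trans hb'.symm)).choose_spec.choose_spec.choose_spec
  rw [← amVal_precomp F (exists_amalgam F (h.trans hb'.symm)).choose_spec.choose ψ
    (exists_amalgam F (h.trans hb'.symm)).choose_spec.choose_spec.choose
    (exists_amalgam F (h.trans hb'.symm)).choose_spec.choose_spec.choose_spec hpre d]
  exact amVal_indep F _ _ _ _ _ _ d

theorem projBij (i : I) (a : ((PP F).obj i).A) (x : APt F) (h : iA F i a = x) :
    Function.Bijective (fun s : DirPt F x => s.1 i a h) := by
  constructor
  · intro s t e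
    refine Subtype.ext (funext fun j => funext fun b => funext fun hb => ?_)
    obtain ⟨k, u, v, huv⟩ := exists_amalgam F (h.trans hb.symm)
    have hk : iA F k (((PP F).map v).onPos b) = x := (iA_w F v b).symm.trans hb
    have hk' : iA F k (((PP F).map u).onPos a) = x := by rw [huv]; exact hk
    have e1 : s.1 i a h = ((PP F).map u).onDir a (s.1 k _ hk') := s.2 i k u a hk'
    have e2 : t.1 i a h = ((PP F).map u).onDir a (t.1 k _ hk') := t.2 i k u a hk'
    have key : s.1 k (((PP F).map u).onPos a) hk' = t.1 k (((PP F).map u).onPos a) hk' :=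
      ((F.map u).2 a).1 (e1.symm.trans (e.trans e2))
    have keyv : s.1 k (((PP F).map v).onPos b) hk = t.1 k (((PP F).map v).onPos b) hk :=
      eq_of_heq (((DirPt.fst_congr F s k huv hk' hk).symm.trans (heq_of_eq key)).trans
        (DirPt.fst_congr F t k huv hk' hk))
    calc s.1 j b hb = ((PP F).map v).onDir b (s.1 k _ hk) := s.2 j k v b hk
      _ = ((PP F).map v).onDir b (t.1 k _ hk) := congrArg _ keyv
      _ = t.1 j b hb := (t.2 j k v b hk).symm
  · intro d
    refine ⟨liftDir F i a x h d, ?_⟩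
    exact (amVal_indep F
      (exists_amalgam F (h.trans h.symm)).choose_spec.choose
      (exists_amalgam F (h.trans h.symm)).choose_spec.choose_spec.choose
      (𝟙 i) (𝟙 i)
      (exists_amalgam F (h.trans h.symm)).choose_spec.choose_spec.choose_spec rfl d).trans
      (amVal_id F d)


/-- The projection from colimit directions to directions of a representative, as an
equivalence. -/
noncomputable def dirEquivAt (i : I) (a : ((PP F).obj i).A) (x : APt F) (h : iA F i a = x) :
    DirPt F x ≃ ((PP F).obj i).B a :=
  Equiv.ofBijective _ (projBij F i a x h)

variable (X : Type u)

/-- The canonical comparison map `colim (p_i(X)) → (colim p_i)(X)`. -/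
noncomputable def theta : colimit (PP F ⋙ evalPoly X) → (colimP F).Obj X :=
  fun w => colimit.desc (PP F ⋙ evalPoly X) ((evalPoly X).mapCocone (coconeP F)) w

lemma theta_surjective : Function.Surjective (theta F X) := by
  rintro ⟨x, f⟩
  revert f
  induction x using Quot.ind with
  | _ k =>
    obtain ⟨i, a⟩ := k
    intro f
    refine ⟨colimit.ι (PP F ⋙ evalPoly X) i
      (⟨a, fun d => f ((dirEquivAt F i a (iA F i a) rfl).symm d)⟩ : ((PP F).obj i).Obj X), ?_⟩
    refine (ConcreteCategory.congr_hom (colimit.ι_desc ((evalPoly X).mapCocone (coconeP F)) i) _).trans ?_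
    exact congrArg (Sigma.mk (iA F i a)) (funext fun s =>
      congrArg f ((dirEquivAt F i a (iA F i a) rfl).symm_apply_apply s))

lemma theta_injective : Function.Injective (theta F X) := by
  intro w w' e
  obtain ⟨i, y, rfl⟩ := Types.jointly_surjective' w
  obtain ⟨j, y', rfl⟩ := Types.jointly_surjective' w'
  change ((PP F).obj i).Obj X at y
  obtain ⟨a, g⟩ := y
  change ((PP F).obj j).Obj X at y'
  obtain ⟨b, g'⟩ := y'
  have e2 : (((evalPoly X).mapCocone (coconeP F)).ι.app i ⟨a, g⟩ : (colimP F).Obj X)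
      = ((evalPoly X).mapCocone (coconeP F)).ι.app j ⟨b, g'⟩ :=
    (ConcreteCategory.congr_hom (colimit.ι_desc ((evalPoly X).mapCocone (coconeP F)) i) ⟨a, g⟩).symm.trans
      (e.trans (ConcreteCategory.congr_hom (colimit.ι_desc ((evalPoly X).mapCocone (coconeP F)) j) ⟨b, g'⟩))
  have hx : iA F i a = iA F j b := congrArg Sigma.fst e2
  obtain ⟨k, u, v, huv⟩ := exists_amalgam F hx
  have hkj : iA F k (((PP F).map v).onPos b) = iA F j b := (iA_w F v b).symm
  have hku : iA F k (((PP F).map u).onPos a) = iA F j b := by rw [huv]; exact hkj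
  have main : ∀ (dd : ((PP F).obj k).B (((PP F).map u).onPos a))
      (dd' : ((PP F).obj k).B (((PP F).map v).onPos b)), HEq dd dd' →
      g (((PP F).map u).onDir a dd) = g' (((PP F).map v).onDir b dd') := by
    intro dd dd' hdd
    set s : DirPt F (iA F j b) := (dirEquivAt F k _ _ hkj).symm dd' with hs_def
    have hs : s.1 k (((PP F).map v).onPos b) hkj = dd' :=
      (dirEquivAt F k _ _ hkj).apply_symm_apply dd'
    have hsnd := obj_snd_congr e2 (cast_heq (congrArg (DirPt F) hx).symm s)
    -- hsnd : g ((cast _ s).1 i a rfl) = g' (s.1 j b rfl)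
    have h1 : (cast (congrArg (DirPt F) hx).symm s).1 i a rfl = s.1 i a (rfl.trans hx) :=
      DirPt.cast_fst F hx s i a rfl
    have h2 : s.1 i a (rfl.trans hx) = ((PP F).map u).onDir a (s.1 k _ hku) :=
      s.2 i k u a hku
    have h3 : s.1 k (((PP F).map u).onPos a) hku = dd :=
      eq_of_heq (((DirPt.fst_congr F s k huv hku hkj).trans (heq_of_eq hs)).trans hdd.symm)
    have h4 : s.1 j b rfl = ((PP F).map v).onDir b (s.1 k _ hkj) := s.2 j k v b hkj
    calc g (((PP F).map u).onDir a dd)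
        = g (((PP F).map u).onDir a (s.1 k _ hku)) := by rw [h3]
      _ = g (s.1 i a (rfl.trans hx)) := by rw [h2]
      _ = g ((cast (congrArg (DirPt F) hx).symm s).1 i a rfl) := by rw [h1]
      _ = g' (s.1 j b rfl) := hsnd
      _ = g' (((PP F).map v).onDir b (s.1 k _ hkj)) := by rw [← h4]
      _ = g' (((PP F).map v).onDir b dd') := by rw [hs]
  calc colimit.ι (PP F ⋙ evalPoly X) i ⟨a, g⟩
      = colimit.ι (PP F ⋙ evalPoly X) k ((PP F ⋙ evalPoly X).map u ⟨a, g⟩) :=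
        (ConcreteCategory.congr_hom (colimit.w (PP F ⋙ evalPoly X) u) ⟨a, g⟩).symm
    _ = colimit.ι (PP F ⋙ evalPoly X) k ((PP F ⋙ evalPoly X).map v ⟨b, g'⟩) :=
        congrArg _ (objMk_congr huv main)
    _ = colimit.ι (PP F ⋙ evalPoly X) j ⟨b, g'⟩ :=
        ConcreteCategory.congr_hom (colimit.w (PP F ⋙ evalPoly X) v) ⟨b, g'⟩

/-- Evaluation of the explicit colimit cocone is a colimit of sets. -/
noncomputable def evalColimit : IsColimit ((evalPoly X).mapCocone (coconeP F)) :=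
  IsColimit.ofIsoColimit (colimit.isColimit (PP F ⋙ evalPoly X))
    (Cocones.ext (show (colimit.cocone (PP F ⋙ evalPoly X)).pt ≅ ((evalPoly X).mapCocone (coconeP F)).pt from Equiv.toIso (Equiv.ofBijective (theta F X)
        ⟨theta_injective F X, theta_surjective F X⟩))
      (fun i => colimit.ι_desc ((evalPoly X).mapCocone (coconeP F)) i))

end Filtered

end Aux

/-- For a filtered diagram in `Poly` all of whose structure maps are
cartesian, colimits are computed pointwise: for every set `X`, evaluation at `X` sends
any colimit cocone (in `Poly`) to a colimit cocone of sets.  That is, the canonical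
function `colim_i (p_i(X)) → (colim_i p_i)(X)` is a bijection. -/
theorem eval_preserves_filtered_cartesian_colimits {I : Type u} [Category.{u} I]
    [IsFiltered I] (F : I ⥤ PolyCart.{u})
    (c : Cocone (F ⋙ polyCartIncl)) (hc : IsColimit c) (X : Type u) :
    Nonempty (IsColimit ((evalPoly X).mapCocone c)) := by
  exact ⟨IsColimit.ofIsoColimit (evalColimit F X)
    ((Cocones.functoriality (F ⋙ polyCartIncl) (evalPoly X)).mapIso
      ((coconeP_isColimit F).uniqueUpToIso hc))⟩
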